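/- The union of an open set S and a set D discrete in itself with S ∩ D = ∅ in a Polish space is a Δ⁰₂ set. -/

import Mathlib

def IsFSigma {X : Type*} [TopologicalSpace X] (E : Set X) : Prop :=
  ∃ f : ℕ → Set X, (∀ n, IsClosed (f n)) ∧ E = ⋃ n, f n

/-- `D` is discrete in itself: each point of `D` has a neighborhood
meeting `D` only in that point. -/
def DiscreteInItself {X : Type*} [TopologicalSpace X] (D : Set X) : Prop :=
  ∀ x ∈ D, ∃ W : Set X, IsOpen W ∧ x ∈ W ∧ W ∩ D = {x}

lemma isFSigma_of_compl_isGδ {X : Type*} [TopologicalSpace X] {E : Set X}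
    (h : IsGδ Eᶜ) : IsFSigma E := by
  obtain ⟨f, hfo, hfe⟩ := isGδ_iff_eq_iInter_nat.1 h
  refine ⟨fun n => (f n)ᶜ, fun n => (hfo n).isClosed_compl, ?_⟩
  rw [← compl_compl E, hfe, Set.compl_iInter]

lemma isFSigma_union {X : Type*} [TopologicalSpace X] {E F : Set X}
    (hE : IsFSigma E) (hF : IsFSigma F) : IsFSigma (E ∪ F) := by
  obtain ⟨f, hf, hfe⟩ := hE
  obtain ⟨g, hg, hge⟩ := hF
  refine ⟨fun n => f n ∪ g n, fun n => (hf n).union (hg n), ?_⟩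
  rw [hfe, hge, Set.iUnion_union_distrib]

lemma isFSigma_inter_closed {X : Type*} [TopologicalSpace X] {E C : Set X}
    (hE : IsFSigma E) (hC : IsClosed C) : IsFSigma (E ∩ C) := by
  obtain ⟨f, hf, hfe⟩ := hE
  refine ⟨fun n => f n ∩ C, fun n => (hf n).inter hC, ?_⟩
  rw [hfe, Set.iUnion_inter]

/-- A set that is discrete in itself equals (closure D) ∩ U for some open U. -/
lemma discreteInItself_locallyClosed {X : Type*} [TopologicalSpace X] [T1Space X]
    {D : Set X} (hD : DiscreteInItself D) :
    ∃ U : Set X, IsOpen U ∧ D = U ∩ closure D := by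
  choose W hWo hxW hWD using hD
  refine ⟨⋃ x ∈ D, W x ‹_›, isOpen_iUnion fun x => isOpen_iUnion fun hx => hWo x hx, ?_⟩
  ext y
  constructor
  · intro hy
    exact ⟨Set.mem_iUnion.2 ⟨y, Set.mem_iUnion.2 ⟨hy, hxW y hy⟩⟩, subset_closure hy⟩
  · rintro ⟨hyU, hyc⟩
    obtain ⟨x, hx, hyW⟩ := Set.mem_iUnion₂.1 hyU
    -- every neighborhood of y contains x, hence y = x since T1
    have hyx : y = x := by
      by_contra hne
      obtain ⟨V, hVo, hyV, hxV⟩ := t1Space_iff_exists_open.1 ‹_› hne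
      have : (V ∩ W x hx ∩ D).Nonempty := by
        have := mem_closure_iff.1 hyc (V ∩ W x hx) (hVo.inter (hWo x hx)) ⟨hyV, hyW⟩
        obtain ⟨z, hz⟩ := this
        exact ⟨z, ⟨hz.1.1, hz.1.2⟩, hz.2⟩
      obtain ⟨z, ⟨hzV, hzW⟩, hzD⟩ := this
      have : z = x := by
        have : z ∈ W x hx ∩ D := ⟨hzW, hzD⟩
        rwa [hWD x hx] at this
      exact hxV (this ▸ hzV)
    rw [hyx]; exact hx

theorem open_union_discrete_delta02 {X : Type*} [TopologicalSpace X] [PolishSpace X]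
    (S D : Set X) (hS : IsOpen S) (hD : DiscreteInItself D) (hdisj : S ∩ D = ∅) :
    IsFSigma (S ∪ D) ∧ IsGδ (S ∪ D) := by
  letI := TopologicalSpace.upgradeIsCompletelyMetrizable X
  obtain ⟨U, hU, hDU⟩ := discreteInItself_locallyClosed hD
  have hSF : IsFSigma S := isFSigma_of_compl_isGδ hS.isClosed_compl.isGδ
  have hUF : IsFSigma U := isFSigma_of_compl_isGδ hU.isClosed_compl.isGδ
  have hDF : IsFSigma D := hDU ▸ isFSigma_inter_closed hUF isClosed_closure
  have hDG : IsGδ D := hDU ▸ hU.isGδ.inter isClosed_closure.isGδ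
  exact ⟨isFSigma_union hSF hDF, hS.isGδ.union hDG⟩
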